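/- arXiv:1201.2647 — 2 statements merged into one kernel-verified Lean document; each statement's English description precedes it below -/
import Mathlib

section
/- The map A : ℝ × Y₀ → Y defined by A(a, x) = q(a) + x is a surjective group homomorphism (with respect to coordinatewise addition on ℝ × Y₀), and its kernel is exactly {(a, q̃(−a)) : a ∈ ℤ}. Moreover A is continuous and is a local homeomorphism. -/
open scoped Real
noncomputable section

/-- `X = ∏_{l≥0} ℝ/r^l ℤ`, with coordinatewise addition and the product topology. -/
abbrev SolX (r : ℕ) := (l : ℕ) → AddCircle ((r : ℝ) ^ l)

/-- The natural homomorphism `ℝ/r^{l+1}ℤ → ℝ/r^l ℤ` induced by the identity on `ℝ`. -/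
def natHom (r l : ℕ) : AddCircle ((r : ℝ) ^ (l + 1)) →+ AddCircle ((r : ℝ) ^ l) :=
  QuotientAddGroup.map _ _ (AddMonoidHom.id ℝ) (by
    intro x hx
    rw [AddSubgroup.mem_comap]
    obtain ⟨k, hk⟩ := AddSubgroup.mem_zmultiples_iff.mp hx
    refine AddSubgroup.mem_zmultiples_iff.mpr ⟨k * (r : ℤ), ?_⟩
    simp only [AddMonoidHom.id_apply, zsmul_eq_mul] at hk ⊢
    rw [← hk]
    push_cast
    ring)

/-- `x ∈ X` is a coherent sequence if `x l` is the image of `x (l+1)` under the natural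
homomorphism, for every `l`. -/
def Coherent (r : ℕ) (x : SolX r) : Prop := ∀ l, natHom r l (x (l + 1)) = x l

/-- The diagonal map `q : ℝ → X`, `q(a) = (a mod r^l ℤ)_{l≥0}`. -/
def qmap (r : ℕ) (a : ℝ) : SolX r := fun _ => (a : AddCircle _)

/-- `X₀ = ∏_{l≥1} ℤ/r^l ℤ`; the coordinate indexed by `l : ℕ` here is the factor
`ℤ/r^(l+1) ℤ` (paper index `l+1`).  Each factor carries the discrete topology, and `X₀`
the product topology. -/
abbrev X0 (r : ℕ) := (l : ℕ) → ZMod (r ^ (l + 1))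

/-- The identification of `X₀` with a subset of `X`: the `l = 0` coordinate is `0` in `ℝ/ℤ`,
and for `l ≥ 1` the coordinate `x_l ∈ ℤ/r^l ℤ` is regarded as an element of `ℝ/r^l ℤ`. -/
def emb (r : ℕ) (x : X0 r) : SolX r
  | 0 => 0
  | (l + 1) => (((x l).val : ℝ) : AddCircle ((r : ℝ) ^ (l + 1)))

/-- The diagonal map `q̃ : ℤ → X₀`, `q̃(a) = (a mod r^l ℤ)_{l≥1}`. -/
def qz (r : ℕ) (a : ℤ) : X0 r := fun l => (a : ZMod (r ^ (l + 1)))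

/-- `x ∈ X₀` is a coherent sequence if `x l` is the image of `x (l+1)` under the natural
ring homomorphism `ℤ/r^{l+2}ℤ → ℤ/r^{l+1}ℤ`, for every `l`. -/
def Coherent0 (r : ℕ) (x : X0 r) : Prop :=
  ∀ l, ZMod.castHom (pow_dvd_pow r (Nat.le_succ (l + 1))) (ZMod (r ^ (l + 1))) (x (l + 1)) = x l

/-- The mapping `A : ℝ × Y₀ → Y`, `A(a,x) = q(a) + x`. -/
def Amap (r : ℕ) (a : ℝ) (x : X0 r) : SolX r := qmap r a + emb r x

/-- `Y₀`, as a topological space (subspace of `X₀`). -/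
abbrev Y0T (r : ℕ) := {x : X0 r // Coherent0 r x}


lemma coe_eq_coe_iff (p a b : ℝ) :
    ((a : AddCircle p) = (b : AddCircle p)) ↔ ∃ k : ℤ, b - a = k * p := by
  have hsub : ((b - a : ℝ) : AddCircle p) = (b : AddCircle p) - (a : AddCircle p) := by
    exact AddCircle.coe_sub p b a
  constructor
  · intro h
    have h0 : ((b - a : ℝ) : AddCircle p) = 0 := by
      rw [hsub, ← h, sub_self]
    obtain ⟨n, hn⟩ := (AddCircle.coe_eq_zero_iff p).mp h0
    exact ⟨n, by rw [← hn]; simp [zsmul_eq_mul]⟩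
  · rintro ⟨k, hk⟩
    have h0 : ((b - a : ℝ) : AddCircle p) = 0 :=
      (AddCircle.coe_eq_zero_iff p).mpr ⟨k, by rw [hk]; simp [zsmul_eq_mul]⟩
    rw [hsub, sub_eq_zero] at h0
    exact h0.symm

/-- bridge: equality in `ZMod m` gives equality of real coercions in `AddCircle p`, `p = m`. -/
lemma zmod_bridge {m : ℕ} [NeZero m] {p : ℝ} (hp : (m : ℝ) = p) {a b : ℤ}
    (h : (a : ZMod m) = (b : ZMod m)) :
    ((a : ℝ) : AddCircle p) = ((b : ℝ) : AddCircle p) := by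
  rw [coe_eq_coe_iff]
  have hd : (m : ℤ) ∣ (b - a) := by
    rw [← ZMod.intCast_zmod_eq_zero_iff_dvd]
    push_cast
    rw [← h, sub_self]
  obtain ⟨k, hk⟩ := hd
  refine ⟨k, ?_⟩
  rw [← hp]
  have : ((b - a : ℤ) : ℝ) = ((m * k : ℤ) : ℝ) := congrArg (fun t : ℤ => (t : ℝ)) hk
  push_cast at this
  linarith

lemma val_coe_zmod {m : ℕ} [NeZero m] (z : ZMod m) : ((z.val : ℤ) : ZMod m) = z := by
  push_cast
  simp [ZMod.natCast_val, ZMod.cast_id]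


-- MORE HELPERS

lemma zmod_bridge_nat {m : ℕ} [NeZero m] {p : ℝ} (hp : (m : ℝ) = p) {a b : ℕ}
    (h : (a : ZMod m) = (b : ZMod m)) :
    ((a : ℝ) : AddCircle p) = ((b : ℝ) : AddCircle p) := by
  have h' : ((a : ℤ) : ZMod m) = ((b : ℤ) : ZMod m) := by push_cast; exact_mod_cast h
  have := zmod_bridge hp h'
  simpa using this

lemma hpow_cast (r l : ℕ) : ((r ^ (l + 1) : ℕ) : ℝ) = (r : ℝ) ^ (l + 1) := by push_cast; ring

lemma neZero_pow {r : ℕ} (hr : 2 ≤ r) (l : ℕ) : NeZero (r ^ (l + 1)) :=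
  ⟨pow_ne_zero _ (by omega)⟩

lemma amap_zero (r : ℕ) (a : ℝ) (x : X0 r) : Amap r a x 0 = (a : AddCircle ((r:ℝ)^0)) := by
  show (a : AddCircle ((r:ℝ)^0)) + 0 = _
  rw [add_zero]

lemma amap_succ (r : ℕ) (a : ℝ) (x : X0 r) (l : ℕ) :
    Amap r a x (l+1) = ((a + ((x l).val : ℝ) : ℝ) : AddCircle ((r:ℝ)^(l+1))) := by
  show (a : AddCircle ((r:ℝ)^(l+1))) + (((x l).val : ℝ) : AddCircle ((r:ℝ)^(l+1))) = _
  rw [AddCircle.coe_add]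

lemma natHom_coe (r l : ℕ) (c : ℝ) :
    natHom r l (c : AddCircle ((r:ℝ)^(l+1))) = (c : AddCircle ((r:ℝ)^l)) := rfl

lemma coh0_val {r : ℕ} (hr : 2 ≤ r) {x : X0 r} (hx : Coherent0 r x) (l : ℕ) :
    (((x (l+1)).val : ℕ) : ZMod (r ^ (l+1))) = (((x l).val : ℕ) : ZMod (r ^ (l+1))) := by
  haveI := neZero_pow hr l
  haveI := neZero_pow hr (l+1)
  rw [ZMod.natCast_val, ZMod.natCast_val, ZMod.cast_id]
  rw [← hx l, ZMod.castHom_apply]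

/-- Part 1: A maps into Y. -/
lemma part1 {r : ℕ} (hr : 2 ≤ r) (a : ℝ) (x : X0 r) (hx : Coherent0 r x) :
    Coherent r (Amap r a x) := by
  intro l
  cases l with
  | zero =>
    rw [amap_succ, natHom_coe, amap_zero, coe_eq_coe_iff]
    exact ⟨-((x 0).val : ℤ), by push_cast; ring⟩
  | succ l =>
    haveI := neZero_pow hr l
    rw [amap_succ, natHom_coe, amap_succ, AddCircle.coe_add, AddCircle.coe_add]
    congr 1
    exact zmod_bridge_nat (hpow_cast r l) (coh0_val hr hx l)

/-- Part 2: A is additive. -/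
lemma part2 {r : ℕ} (hr : 2 ≤ r) (a b : ℝ) (x y : X0 r) :
    Amap r (a + b) (x + y) = Amap r a x + Amap r b y := by
  funext l
  have hco : ∀ c : ℝ, ∀ z : X0 r, (Amap r c z + Amap r b y) l = Amap r c z l + Amap r b y l :=
    fun _ _ => rfl
  cases l with
  | zero =>
    rw [hco, amap_zero, amap_zero, amap_zero, AddCircle.coe_add]
  | succ l =>
    haveI := neZero_pow hr l
    rw [hco, amap_succ, amap_succ, amap_succ, ← AddCircle.coe_add]
    have key : (((x + y) l).val : ZMod (r^(l+1)))
        = ((((x l).val + (y l).val : ℕ)) : ZMod (r^(l+1))) := by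
      have hxy : (x + y) l = x l + y l := rfl
      rw [hxy]
      push_cast
      rw [ZMod.natCast_val, ZMod.natCast_val, ZMod.natCast_val, ZMod.cast_id,
        ZMod.cast_id, ZMod.cast_id]
    have hb := zmod_bridge_nat (hpow_cast r l) key
    rw [coe_eq_coe_iff] at hb ⊢
    obtain ⟨k, hk⟩ := hb
    refine ⟨k, ?_⟩
    push_cast at hk ⊢
    linarith


lemma dvd_of_zmod_eq {m : ℕ} {a b : ℤ} (h : (a : ZMod m) = (b : ZMod m)) : (m : ℤ) ∣ (b - a) := by
  rw [← ZMod.intCast_zmod_eq_zero_iff_dvd]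
  push_cast
  rw [h, sub_self]

lemma zmod_bridge2 {m : ℕ} [NeZero m] {p : ℝ} (hp : (m : ℝ) = p) {za zb : ℤ} {a b : ℝ}
    (ha : (za : ℝ) = a) (hb : (zb : ℝ) = b) (h : (za : ZMod m) = (zb : ZMod m)) :
    ((a : ℝ) : AddCircle p) = ((b : ℝ) : AddCircle p) := by
  subst ha; subst hb; exact zmod_bridge hp h

/-- Part 3 (refined): surjectivity with prescribed real part. -/
lemma exists_lift {r : ℕ} (hr : 2 ≤ r) (y : SolX r) (hy : Coherent r y) (a : ℝ)
    (ha : (a : AddCircle ((r:ℝ)^0)) = y 0) :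
    ∃ x : X0 r, Coherent0 r x ∧ Amap r a x = y := by
  have hex : ∀ l, ∃ n : ℤ, ((a + (n:ℝ) : ℝ) : AddCircle ((r:ℝ)^(l+1))) = y (l+1) := by
    intro l
    induction l with
    | zero =>
      obtain ⟨c, hc⟩ := QuotientAddGroup.mk_surjective (y 1)
      have h0 : ((c : ℝ) : AddCircle ((r:ℝ)^0)) = (a : AddCircle ((r:ℝ)^0)) := by
        rw [ha, ← hy 0, ← hc, natHom_coe]
      obtain ⟨k, hk⟩ := (coe_eq_coe_iff _ _ _).mp h0
      refine ⟨-k, ?_⟩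
      rw [← hc]
      congr 1
      rw [pow_zero, mul_one] at hk
      push_cast
      linarith
    | succ l ih =>
      obtain ⟨n, hn⟩ := ih
      obtain ⟨c, hc⟩ := QuotientAddGroup.mk_surjective (y (l+2))
      have h0 : ((c : ℝ) : AddCircle ((r:ℝ)^(l+1))) = ((a + (n:ℝ) : ℝ) : AddCircle ((r:ℝ)^(l+1))) := by
        rw [hn, ← hy (l+1), ← hc, natHom_coe]
      obtain ⟨k, hk⟩ := (coe_eq_coe_iff _ _ _).mp h0
      refine ⟨n - k * (r:ℤ)^(l+1), ?_⟩
      rw [← hc]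
      congr 1
      push_cast
      linarith
  choose n hn using hex
  refine ⟨fun l => ((n l : ℤ) : ZMod (r^(l+1))), ?_, ?_⟩
  · intro l
    haveI := neZero_pow hr l
    haveI := neZero_pow hr (l+1)
    rw [map_intCast, ZMod.intCast_eq_intCast_iff]
    have h1 : natHom r (l+1) (y (l+2)) = y (l+1) := hy (l+1)
    rw [← hn (l+1), natHom_coe, ← hn l] at h1
    obtain ⟨k, hk⟩ := (coe_eq_coe_iff _ _ _).mp h1
    have hz : (n l - n (l+1) : ℤ) = k * (r:ℤ)^(l+1) := by
      have : ((n l - n (l+1) : ℤ) : ℝ) = ((k * (r:ℤ)^(l+1) : ℤ) : ℝ) := by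
        push_cast
        linarith
      exact_mod_cast this
    refine Int.ModEq.symm (Int.modEq_iff_dvd.mpr ?_)
    refine ⟨-k, ?_⟩
    push_cast
    linarith [hz]
  · funext l
    cases l with
    | zero => rw [amap_zero, ha]
    | succ l =>
      haveI := neZero_pow hr l
      rw [amap_succ, ← hn l, coe_eq_coe_iff]
      have hd := dvd_of_zmod_eq (m := r^(l+1))
        (a := (((n l : ZMod (r^(l+1))).val : ℕ) : ℤ)) (b := n l) (by
          push_cast
          rw [ZMod.natCast_val, ZMod.cast_id])
      obtain ⟨k, hk⟩ := hd
      refine ⟨k, ?_⟩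
      have : ((n l - ((n l : ZMod (r^(l+1))).val : ℕ) : ℤ) : ℝ) = (((r^(l+1) : ℕ) : ℤ) * k : ℤ) := by
        exact_mod_cast congrArg (fun t : ℤ => (t : ℝ)) hk
      push_cast at this
      linarith

lemma zero_coord (r : ℕ) (l : ℕ) : (0 : SolX r) l = ((0:ℝ) : AddCircle ((r:ℝ)^l)) := by
  show (0 : AddCircle ((r:ℝ)^l)) = _
  norm_cast

/-- Part 4: the kernel. -/
lemma kernel_iff {r : ℕ} (hr : 2 ≤ r) (a : ℝ) (x : X0 r) (hx : Coherent0 r x) :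
    Amap r a x = 0 ↔ ∃ n : ℤ, a = (n : ℝ) ∧ x = qz r (-n) := by
  constructor
  · intro h
    have h0 := congrFun h 0
    rw [amap_zero, zero_coord, coe_eq_coe_iff] at h0
    obtain ⟨k, hk⟩ := h0
    rw [pow_zero, mul_one] at hk
    refine ⟨-k, by push_cast; linarith, ?_⟩
    funext l
    haveI := neZero_pow hr l
    have hl := congrFun h (l+1)
    rw [amap_succ, zero_coord, coe_eq_coe_iff] at hl
    obtain ⟨k', hk'⟩ := hl
    show x l = ((-(-k) : ℤ) : ZMod (r^(l+1)))
    have hxval : x l = (((x l).val : ℕ) : ZMod (r^(l+1))) := by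
      rw [ZMod.natCast_val, ZMod.cast_id]
    rw [hxval]
    have : (((x l).val : ℤ) : ZMod (r^(l+1))) = ((-(-k) : ℤ) : ZMod (r^(l+1))) := by
      rw [ZMod.intCast_eq_intCast_iff]
      refine Int.ModEq.symm (Int.modEq_iff_dvd.mpr ?_)
      -- need (r^(l+1) : ℤ) ∣ (x l).val - k ... from hk' : 0 - (a + val) = k' * (r:ℝ)^(l+1), a = -k
      refine ⟨-k', ?_⟩
      have : (((x l).val : ℤ) - k : ℤ) = ((r^(l+1) : ℕ) : ℤ) * (-k') := by
        have hrl : ((((x l).val : ℤ) - k : ℤ) : ℝ) = (((r^(l+1) : ℕ) : ℤ) * (-k') : ℤ) := by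
          push_cast
          nlinarith [hk, hk']
        exact_mod_cast hrl
      linarith [this]
    exact_mod_cast this
  · rintro ⟨n, rfl, rfl⟩
    funext l
    cases l with
    | zero =>
      rw [amap_zero, zero_coord, coe_eq_coe_iff]
      exact ⟨-n, by rw [pow_zero]; push_cast; ring⟩
    | succ l =>
      haveI := neZero_pow hr l
      rw [amap_succ, zero_coord, coe_eq_coe_iff]
      have hd := dvd_of_zmod_eq (m := r^(l+1))
        (a := (((qz r (-n) l).val : ℕ) : ℤ)) (b := -n) (by
          push_cast
          rw [ZMod.natCast_val, ZMod.cast_id]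
          show qz r (-n) l = _
          rw [qz]
          push_cast
          ring)
      obtain ⟨k, hk⟩ := hd
      refine ⟨k, ?_⟩
      have h2 : ((-n - ((qz r (-n) l).val : ℕ) : ℤ) : ℝ) = ((((r^(l+1) : ℕ) : ℤ) * k : ℤ) : ℝ) := by
        exact_mod_cast congrArg (fun t : ℤ => (t : ℝ)) hk
      push_cast at h2
      linarith

/-- Part 5: continuity. -/
lemma part5 (r : ℕ) : Continuous (fun p : ℝ × Y0T r => Amap r p.1 p.2.1) := by
  apply continuous_pi
  intro l
  cases l with
  | zero =>
    show Continuous fun p : ℝ × Y0T r => (p.1 : AddCircle ((r:ℝ)^0)) + 0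
    exact ((AddCircle.continuous_mk' _).comp continuous_fst).add continuous_const
  | succ l =>
    show Continuous fun p : ℝ × Y0T r =>
      (p.1 : AddCircle ((r:ℝ)^(l+1))) + (((p.2.1 l).val : ℝ) : AddCircle ((r:ℝ)^(l+1)))
    refine ((AddCircle.continuous_mk' _).comp continuous_fst).add ?_
    have h2 : Continuous fun p : ℝ × Y0T r => p.2.1 l :=
      (continuous_apply l).comp (continuous_subtype_val.comp continuous_snd)
    exact (continuous_of_discreteTopology
      (f := fun z : ZMod (r^(l+1)) => ((z.val : ℝ) : AddCircle ((r:ℝ)^(l+1))))).comp h2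

lemma compactY0 {r : ℕ} (hr : 2 ≤ r) : CompactSpace (Y0T r) := by
  haveI h1 : ∀ l : ℕ, Finite (ZMod (r ^ (l+1))) := fun l => by
    haveI := neZero_pow hr l
    infer_instance
  haveI : CompactSpace (X0 r) := by
    haveI : ∀ l : ℕ, CompactSpace (ZMod (r ^ (l+1))) := fun l => Finite.compactSpace
    infer_instance
  have hcl : IsClosed {x : X0 r | Coherent0 r x} := by
    have heq : {x : X0 r | Coherent0 r x} =
        ⋂ l, {x : X0 r | ZMod.castHom (pow_dvd_pow r (Nat.le_succ (l + 1)))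
          (ZMod (r ^ (l + 1))) (x (l + 1)) = x l} := by
      ext x
      simp [Coherent0, Set.mem_iInter, Set.mem_setOf_eq]
    rw [heq]
    refine isClosed_iInter fun l => ?_
    exact isClosed_eq
      ((continuous_of_discreteTopology).comp (continuous_apply (l+1)))
      (continuous_apply l)
  exact isCompact_iff_compactSpace.mp hcl.isCompact

lemma int_zero_of_small {k : ℤ} {m : ℝ} (hm : 0 < m) (h : |(k:ℝ) * m| < m) : k = 0 := by
  by_contra hk
  have h1 : (1:ℝ) ≤ |(k:ℝ)| := by
    have : (1:ℤ) ≤ |k| := by rw [Int.abs_eq_natAbs]; omega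
    calc (1:ℝ) ≤ ((|k| : ℤ) : ℝ) := by exact_mod_cast this
    _ = |(k:ℝ)| := by push_cast; rfl
  rw [abs_mul, abs_of_pos hm] at h
  nlinarith

/-- injectivity on a strip of width < 1 -/
lemma injOnStrip {r : ℕ} (hr : 2 ≤ r) (c : ℝ) :
    Set.InjOn (fun q : ℝ × Y0T r => Amap r q.1 q.2.1)
      (Set.Icc (c - 1/3) (c + 1/3) ×ˢ (Set.univ : Set (Y0T r))) := by
  rintro ⟨a, x⟩ ⟨ha, -⟩ ⟨b, y⟩ ⟨hb, -⟩ h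
  simp only at h
  have h0 := congrFun h 0
  rw [amap_zero, amap_zero, coe_eq_coe_iff] at h0
  obtain ⟨k, hk⟩ := h0
  rw [pow_zero, mul_one] at hk
  have hab : a = b := by
    have : k = 0 := by
      have : |(k:ℝ) * 1| < 1 := by
        rw [mul_one, ← hk]
        rw [Set.mem_Icc] at ha hb
        rw [abs_lt]
        constructor <;> linarith [ha.1, ha.2, hb.1, hb.2]
      exact int_zero_of_small one_pos this
    rw [this] at hk
    push_cast at hk
    linarith
  subst hab
  have hxy : x = y := by
    apply Subtype.ext
    funext l
    haveI := neZero_pow hr l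
    have hl := congrFun h (l+1)
    rw [amap_succ, amap_succ, coe_eq_coe_iff] at hl
    obtain ⟨k, hk⟩ := hl
    have hm : (0:ℝ) < (r:ℝ)^(l+1) := by
      have : (0:ℝ) < (r:ℝ) := by exact_mod_cast (by omega : 0 < r)
      positivity
    have hval : ∀ z : ZMod (r^(l+1)), ((z.val : ℝ)) < (r:ℝ)^(l+1) := fun z => by
      rw [← hpow_cast r l]
      exact_mod_cast ZMod.val_lt z
    have hk0 : k = 0 := by
      apply int_zero_of_small hm
      rw [← hk, abs_lt]
      have h1 := hval ((x : X0 r) l)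
      have h2 := hval ((y : X0 r) l)
      have h3 : (0:ℝ) ≤ (((x : X0 r) l).val : ℝ) := by positivity
      have h4 : (0:ℝ) ≤ (((y : X0 r) l).val : ℝ) := by positivity
      constructor <;> linarith
    rw [hk0] at hk
    push_cast at hk
    have : ((x : X0 r) l).val = ((y : X0 r) l).val := by exact_mod_cast (by linarith : ((((x : X0 r) l).val : ℝ)) = (((y : X0 r) l).val : ℝ))
    exact ZMod.val_injective _ this
  rw [hxy]

/-- `A : ℝ × Y₀ → Y` is a surjective group homomorphism with kernel
`{(a, q̃(-a)) : a ∈ ℤ}`, it is continuous, and it is a local homeomorphism onto `Y`. -/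
theorem stmt_10 (r : ℕ) (hr : 2 ≤ r) :
    -- A maps ℝ × Y₀ into Y
    (∀ (a : ℝ) (x : X0 r), Coherent0 r x → Coherent r (Amap r a x)) ∧
    -- A is a homomorphism
    (∀ (a b : ℝ) (x y : X0 r), Coherent0 r x → Coherent0 r y →
      Amap r (a + b) (x + y) = Amap r a x + Amap r b y) ∧
    -- A is surjective onto Y
    (∀ y : SolX r, Coherent r y → ∃ (a : ℝ) (x : X0 r), Coherent0 r x ∧ Amap r a x = y) ∧
    -- the kernel of A is {(a, q̃(-a)) : a ∈ ℤ}
    (∀ (a : ℝ) (x : X0 r), Coherent0 r x →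
      (Amap r a x = 0 ↔ ∃ n : ℤ, a = (n : ℝ) ∧ x = qz r (-n))) ∧
    -- A is continuous (equivalently, continuous into the subspace Y of X)
    Continuous (fun p : ℝ × Y0T r => Amap r p.1 p.2.1) ∧
    -- A is a local homeomorphism onto Y: every point of ℝ × Y₀ has an open neighborhood U
    -- mapped bijectively onto a relatively open subset of Y, with continuous inverse
    (∀ p : ℝ × Y0T r, ∃ U : Set (ℝ × Y0T r), p ∈ U ∧ IsOpen U ∧
      (∃ V : Set (SolX r), IsOpen V ∧
        (fun q : ℝ × Y0T r => Amap r q.1 q.2.1) '' U = V ∩ {y | Coherent r y} ∧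
        Set.InjOn (fun q : ℝ × Y0T r => Amap r q.1 q.2.1) U ∧
        (∃ g : SolX r → ℝ × Y0T r,
          ContinuousOn g (V ∩ {y | Coherent r y}) ∧
          ∀ q ∈ U, g (Amap r q.1 q.2.1) = q))) := by
  refine ⟨fun a x hx => part1 hr a x hx,
    fun a b x y hx hy => part2 hr a b x y,
    ?_, fun a x hx => kernel_iff hr a x hx, part5 r, ?_⟩
  · intro y hy
    obtain ⟨a, ha⟩ := QuotientAddGroup.mk_surjective (y 0)
    obtain ⟨x, hx, hax⟩ := exists_lift hr y hy a ha
    exact ⟨a, x, hx, hax⟩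
  · rintro ⟨a₀, x₀⟩
    classical
    haveI := compactY0 (r := r) hr
    set A : ℝ × Y0T r → SolX r := fun q => Amap r q.1 q.2.1 with hA
    set I : Set ℝ := Set.Ioo (a₀ - 1/3) (a₀ + 1/3) with hI
    set U : Set (ℝ × Y0T r) := I ×ˢ (Set.univ : Set (Y0T r)) with hU
    set K : Set (ℝ × Y0T r) :=
      Set.Icc (a₀ - 1/3) (a₀ + 1/3) ×ˢ (Set.univ : Set (Y0T r)) with hK
    set W : Set (AddCircle ((r:ℝ)^0)) := ((↑) : ℝ → AddCircle ((r:ℝ)^0)) '' I with hW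
    set V : Set (SolX r) := (fun y : SolX r => y 0) ⁻¹' W with hV
    have hUK : U ⊆ K := Set.prod_mono Set.Ioo_subset_Icc_self subset_rfl
    have hInj : Set.InjOn A K := injOnStrip hr a₀
    have hUopen : IsOpen U := isOpen_Ioo.prod isOpen_univ
    have hpU : (a₀, x₀) ∈ U := ⟨⟨by linarith, by linarith⟩, trivial⟩
    have hWopen : IsOpen W := QuotientAddGroup.isOpenMap_coe I isOpen_Ioo
    have hVopen : IsOpen V := hWopen.preimage (continuous_apply 0)
    have hImg : A '' U = V ∩ {y | Coherent r y} := by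
      ext y
      constructor
      · rintro ⟨⟨a, x⟩, ⟨haI, -⟩, rfl⟩
        refine ⟨?_, part1 hr a x.1 x.2⟩
        show Amap r a x.1 0 ∈ W
        rw [amap_zero]
        exact ⟨a, haI, rfl⟩
      · rintro ⟨hyV, hyC⟩
        obtain ⟨a, haI, ha0⟩ := hyV
        obtain ⟨x, hx, hax⟩ := exists_lift hr y hyC a ha0
        exact ⟨(a, ⟨x, hx⟩), ⟨haI, trivial⟩, hax⟩
    have hKcomp : IsCompact K := isCompact_Icc.prod isCompact_univ
    haveI : CompactSpace K := isCompact_iff_compactSpace.mp hKcomp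
    set f : K → SolX r := fun k => A k.1 with hf
    have hfc : Continuous f := (part5 r).comp continuous_subtype_val
    have hfinj : Function.Injective f := fun k k' h => Subtype.ext (hInj k.2 k'.2 h)
    have hemb := hfc.isClosedEmbedding hfinj
    set e := hemb.toIsEmbedding.toHomeomorph with he
    set g : SolX r → ℝ × Y0T r := fun y =>
      if h : y ∈ Set.range f then ((e.symm ⟨y, h⟩ : K) : ℝ × Y0T r) else (a₀, x₀) with hg
    have hrange : Set.range f = A '' K := (Set.image_eq_range A K).symm
    refine ⟨U, hpU, hUopen, V, hVopen, hImg, hInj.mono hUK, g, ?_, ?_⟩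
    · have hsub : V ∩ {y | Coherent r y} ⊆ Set.range f := by
        rw [← hImg, hrange]
        exact Set.image_mono hUK
      refine ContinuousOn.mono ?_ hsub
      rw [continuousOn_iff_continuous_restrict]
      have hres : (Set.range f).restrict g = fun z => ((e.symm z : K) : ℝ × Y0T r) := by
        funext z
        simp only [Set.restrict_apply, hg]
        exact dif_pos z.2
      rw [show (Set.range f).domRestrict g = fun z => ((e.symm z : K) : ℝ × Y0T r) from hres]
      exact continuous_subtype_val.comp e.symm.continuous
    · intro q hq
      have hqK : q ∈ K := hUK hq
      have hmem : A q ∈ Set.range f := ⟨⟨q, hqK⟩, rfl⟩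
      show g (A q) = q
      rw [hg]
      simp only
      rw [dif_pos hmem]
      have hsy : e.symm ⟨A q, hmem⟩ = ⟨q, hqK⟩ := by
        have h1 : e ⟨q, hqK⟩ = ⟨A q, hmem⟩ := Subtype.ext rfl
        rw [← h1, Homeomorph.symm_apply_apply]
      rw [hsy]
end
end

section
/- There exists a constant c₂ > 0, depending only on r, such that for all a, b ∈ ℝ with |a − b| ≤ 1/2 and all x, y ∈ Y₀, one has D((a, x), (b, y)) ≤ c₂ · d(A(a, x), A(b, y)), where D((a, x), (b, y)) = max(|a − b|, ρ(x, y)). -/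
open scoped Real
noncomputable section

/-- The standard isomorphism `φ_l : ℝ/r^l ℤ → 𝕋 ⊆ ℂ`, `φ_l(a mod r^l ℤ) = exp(2πi r^{-l} a)`,
viewed as a complex-valued function. -/
def phi (r l : ℕ) (x : AddCircle ((r : ℝ) ^ l)) : ℂ := (AddCircle.toCircle x : ℂ)

/-- The `l`-th term `r^{-l} |φ_l(x_l) - φ_l(y_l)|`. -/
def dterm (r : ℕ) (x y : SolX r) (l : ℕ) : ℝ :=
  ((r : ℝ) ^ l)⁻¹ * ‖phi r l (x l) - phi r l (y l)‖

/-- `d(x,y) = max_{l ≥ 0} r^{-l} |φ_l(x_l) - φ_l(y_l)|`. -/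
def dX (r : ℕ) (x y : SolX r) : ℝ := ⨆ l, dterm r x y l

/-- For `x ≠ y`, the (`0`-based) index of the first coordinate where `x` and `y` differ;
in the paper's (`1`-based) notation this is `l(x,y) - 1`. -/
def firstDiff (r : ℕ) (x y : X0 r) : ℕ := sInf {n | x n ≠ y n}

open Classical in
/-- `ρ(x,y) = r^{-l(x,y)+1}`, and `ρ(x,x) = 0`. -/
def rho (r : ℕ) (x y : X0 r) : ℝ :=
  if x = y then 0 else ((r : ℝ) ^ firstDiff r x y)⁻¹

/-- The metric `D((a,x),(b,y)) = max(|a-b|, ρ(x,y))` on `ℝ × Y₀`. -/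
def Dmet (r : ℕ) (a b : ℝ) (x y : X0 r) : ℝ := max |a - b| (rho r x y)


lemma chord_eq (θ : ℝ) :
    ‖Complex.exp ((θ : ℂ) * Complex.I) - 1‖ = 2 * |Real.sin (θ / 2)| := by
  have key : Complex.exp ((θ:ℂ) * Complex.I) - 1
      = Complex.exp (((θ/2 : ℝ):ℂ) * Complex.I) * (2 * Complex.I * Complex.sin ((θ/2:ℝ):ℂ)) := by
    rw [Complex.sin]
    have h2 : ((θ:ℂ)) * Complex.I = ((θ/2:ℝ):ℂ)*Complex.I + ((θ/2:ℝ):ℂ)*Complex.I := by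
      push_cast; ring
    rw [h2, Complex.exp_add]
    have hEF : Complex.exp (((θ/2:ℝ):ℂ)*Complex.I) * Complex.exp (-(((θ/2:ℝ):ℂ)*Complex.I)) = 1 := by
      rw [← Complex.exp_add]; simp
    have : (-(((θ/2:ℝ):ℂ)) * Complex.I) = -((((θ/2:ℝ):ℂ))*Complex.I) := by ring
    rw [this]
    linear_combination hEF - Complex.exp (((θ/2:ℝ):ℂ)*Complex.I) *
      (Complex.exp (-((((θ/2:ℝ):ℂ))*Complex.I)) - Complex.exp ((((θ/2:ℝ):ℂ))*Complex.I)) * Complex.I_sq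
  rw [key, norm_mul, norm_mul, norm_mul, Complex.norm_exp_ofReal_mul_I, Complex.norm_I,
    ← Complex.ofReal_sin, Complex.norm_real]
  simp

lemma chord_ge (w δ : ℝ) (hδ : ∀ m : ℤ, δ ≤ |w - m|) :
    4 * δ ≤ ‖Complex.exp (((2 * π * w : ℝ) : ℂ) * Complex.I) - 1‖ := by
  set u : ℝ := w - round w with hu
  have hu2 : |u| ≤ 1 / 2 := abs_sub_round w
  have hδu : δ ≤ |u| := hδ (round w)
  have hsplit : ((2 * π * w : ℝ) : ℂ) * Complex.I
      = ((2 * π * u : ℝ) : ℂ) * Complex.I + ((round w : ℤ) : ℂ) * (2 * (π:ℂ) * Complex.I) := by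
    push_cast [hu]; ring
  rw [hsplit, Complex.exp_add, Complex.exp_int_mul_two_pi_mul_I, mul_one, chord_eq]
  have h1 : 2 * π * u / 2 = π * u := by ring
  rw [h1]
  have h2 : |Real.sin (π * u)| = Real.sin (π * |u|) := by
    rcases abs_cases u with ⟨h, _⟩ | ⟨h, hneg⟩
    · rw [h, abs_of_nonneg]
      exact Real.sin_nonneg_of_nonneg_of_le_pi (by positivity)
        (by nlinarith [Real.pi_pos, h ▸ hu2])
    · have hs : Real.sin (π * u) ≤ 0 := by
        have h4 := Real.sin_nonneg_of_nonneg_of_le_pi (x := π * (-u))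
          (by nlinarith [Real.pi_pos]) (by nlinarith [Real.pi_pos, h ▸ hu2])
        rw [show π * u = -(π * (-u)) by ring, Real.sin_neg]; linarith
      rw [h, mul_neg, Real.sin_neg, abs_of_nonpos hs]
  rw [h2]
  have h3 : 2 / π * (π * |u|) ≤ Real.sin (π * |u|) :=
    Real.mul_le_sin (by positivity) (by nlinarith [Real.pi_pos])
  have hpi : π ≠ 0 := Real.pi_ne_zero
  calc 4 * δ ≤ 4 * |u| := by linarith
    _ = 2 * (2 / π * (π * |u|)) := by field_simp; ring
    _ ≤ 2 * Real.sin (π * |u|) := by linarith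

lemma dist_int_ge {w : ℝ} (h : |w| ≤ 1/2) (m : ℤ) : |w| ≤ |w - m| := by
  rcases eq_or_ne m 0 with rfl | hm
  · simp
  · have h1 : (1:ℝ) ≤ |(m:ℝ)| := by exact_mod_cast Int.one_le_abs hm
    have h2 : |(m:ℝ)| - |w| ≤ |(m:ℝ) - w| := abs_sub_abs_le_abs_sub _ _
    rw [abs_sub_comm w (m:ℝ)]
    linarith

lemma abs_phi_sub (r l : ℕ) (u v : ℝ) :
    ‖phi r l ((u : ℝ) : AddCircle ((r:ℝ)^l)) - phi r l ((v : ℝ) : AddCircle ((r:ℝ)^l))‖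
      = ‖Complex.exp (((2 * π * ((u - v) / (r:ℝ)^l) : ℝ) : ℂ) * Complex.I) - 1‖ := by
  unfold phi
  rw [AddCircle.toCircle_apply_mk, AddCircle.toCircle_apply_mk, Circle.coe_exp, Circle.coe_exp]
  have hfac : Complex.exp (((2*π/(r:ℝ)^l*u : ℝ):ℂ) * Complex.I)
        - Complex.exp (((2*π/(r:ℝ)^l*v : ℝ):ℂ) * Complex.I)
      = Complex.exp (((2*π/(r:ℝ)^l*v : ℝ):ℂ) * Complex.I)
        * (Complex.exp (((2*π*((u-v)/(r:ℝ)^l) : ℝ):ℂ) * Complex.I) - 1) := by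
    rw [mul_sub, ← Complex.exp_add, mul_one]
    congr 2
    push_cast
    ring
  rw [hfac, norm_mul, Complex.norm_exp_ofReal_mul_I, one_mul]

lemma dterm_nonneg (r : ℕ) (x y : SolX r) (l : ℕ) : 0 ≤ dterm r x y l := by
  unfold dterm; positivity

lemma dterm_le_two (r : ℕ) (hr : 1 ≤ (r:ℝ)) (x y : SolX r) (l : ℕ) : dterm r x y l ≤ 2 := by
  unfold dterm
  have h1 : ((r:ℝ)^l)⁻¹ ≤ 1 := inv_le_one_of_one_le₀ (one_le_pow₀ hr)
  have habs : ‖phi r l (x l) - phi r l (y l)‖ ≤ 2 := by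
    have hx : ‖phi r l (x l)‖ = 1 := Circle.norm_coe _
    have hy : ‖phi r l (y l)‖ = 1 := Circle.norm_coe _
    have := norm_sub_le_norm_sub_add_norm_sub (phi r l (x l)) 0 (phi r l (y l))
    simp only [sub_zero, zero_sub, norm_neg] at this
    linarith
  calc ((r:ℝ)^l)⁻¹ * ‖phi r l (x l) - phi r l (y l)‖ ≤ 1 * 2 :=
        mul_le_mul h1 habs (by positivity) one_pos.le
    _ = 2 := one_mul 2


lemma coh_dvd (r : ℕ) (hr : 2 ≤ r) (x y : X0 r) (hx : Coherent0 r x) (hy : Coherent0 r y)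
    (n : ℕ) (hlt : ∀ m, m < n → x m = y m) :
    ((r:ℤ))^n ∣ ((x n).val : ℤ) - ((y n).val : ℤ) := by
  cases n with
  | zero => simpa using one_dvd _
  | succ m =>
    haveI : NeZero (r ^ (m+1)) := ⟨pow_ne_zero _ (by omega)⟩
    haveI : NeZero (r ^ (m+1+1)) := ⟨pow_ne_zero _ (by omega)⟩
    have e1 := hx m
    have e2 := hy m
    have e3 : x m = y m := hlt m (Nat.lt_succ_self m)
    rw [ZMod.castHom_apply, ← ZMod.natCast_val] at e1 e2
    have h1 : ((x (m+1)).val : ZMod (r^(m+1))) = ((y (m+1)).val : ZMod (r^(m+1))) := by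
      rw [e1, e2, e3]
    have h2 : (x (m+1)).val ≡ (y (m+1)).val [MOD r^(m+1)] :=
      (ZMod.natCast_eq_natCast_iff _ _ _).mp h1
    have h3 := (Nat.modEq_iff_dvd).mp h2
    push_cast at h3
    have h4 := dvd_neg.mpr h3
    rw [neg_sub] at h4
    exact h4

/-- There is a constant `c₂ > 0`, depending only on `r`, such that
`D((a,x),(b,y)) ≤ c₂ d(A(a,x), A(b,y))` whenever `|a - b| ≤ 1/2` and `x, y ∈ Y₀`. -/
theorem stmt_12 (r : ℕ) (hr : 2 ≤ r) :
    ∃ c₂ : ℝ, 0 < c₂ ∧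
      ∀ (a b : ℝ) (x y : X0 r), Coherent0 r x → Coherent0 r y → |a - b| ≤ 1 / 2 →
        Dmet r a b x y ≤ c₂ * dX r (Amap r a x) (Amap r b y) := by
  have hr1 : (1:ℝ) ≤ (r:ℝ) := by exact_mod_cast Nat.one_le_of_lt hr
  have hr2 : (2:ℝ) ≤ (r:ℝ) := by exact_mod_cast hr
  refine ⟨(r:ℝ)^2, by positivity, ?_⟩
  intro a b x y hx hy hab
  set X := Amap r a x with hXdef
  set Y := Amap r b y with hYdef
  have hbdd : BddAbove (Set.range (dterm r X Y)) := by
    refine ⟨2, ?_⟩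
    rintro _ ⟨l, rfl⟩
    exact dterm_le_two r hr1 X Y l
  have hle : ∀ l, dterm r X Y l ≤ dX r X Y := fun l => le_ciSup hbdd l
  have hd0 : 0 ≤ dX r X Y := le_trans (dterm_nonneg r X Y 0) (hle 0)
  -- bound |a - b|
  have habd : |a - b| ≤ (r:ℝ)^2 * dX r X Y := by
    have hX0 : X 0 = ((a : ℝ) : AddCircle ((r:ℝ)^0)) := by
      show qmap r a 0 + emb r x 0 = _
      simp [qmap, emb]
    have hY0 : Y 0 = ((b : ℝ) : AddCircle ((r:ℝ)^0)) := by
      show qmap r b 0 + emb r y 0 = _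
      simp [qmap, emb]
    have h0 : dterm r X Y 0
        = ‖Complex.exp (((2 * π * (a - b) : ℝ) : ℂ) * Complex.I) - 1‖ := by
      unfold dterm
      rw [hX0, hY0, abs_phi_sub]
      norm_num
    have hchord := chord_ge (a - b) |a - b| (dist_int_ge hab)
    have h4 : 4 * |a - b| ≤ dX r X Y := by
      calc 4 * |a - b| ≤ dterm r X Y 0 := by rw [h0]; exact hchord
        _ ≤ dX r X Y := hle 0
    nlinarith [mul_le_mul_of_nonneg_right (show (1:ℝ) ≤ (r:ℝ)^2 by nlinarith) hd0]
  -- bound rho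
  have hrho : rho r x y ≤ (r:ℝ)^2 * dX r X Y := by
    rcases eq_or_ne x y with rfl | hxy
    · rw [rho, if_pos rfl]
      positivity
    · rw [rho, if_neg hxy]
      set n := firstDiff r x y with hn
      have hS : {m | x m ≠ y m}.Nonempty := Function.ne_iff.mp hxy
      have hmem : x n ≠ y n := Nat.sInf_mem hS
      have hlt : ∀ m, m < n → x m = y m := fun m hm => by
        by_contra h
        exact absurd hm (not_lt.mpr (Nat.sInf_le h))
      haveI : NeZero (r ^ (n+1)) := ⟨pow_ne_zero _ (by omega)⟩
      set u : ℕ := (x n).val with hu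
      set v : ℕ := (y n).val with hv
      have hdvd : ((r:ℤ))^n ∣ (u : ℤ) - v := coh_dvd r hr x y hx hy n hlt
      have hune : (u : ℤ) ≠ (v : ℤ) := by
        intro h
        exact hmem (ZMod.val_injective _ (by exact_mod_cast h))
      have hult : u < r^(n+1) := ZMod.val_lt _
      have hvlt : v < r^(n+1) := ZMod.val_lt _
      -- the coordinate n+1
      have hXn : X (n+1) = (((a + u : ℝ)) : AddCircle ((r:ℝ)^(n+1))) := by
        show qmap r a (n+1) + emb r x (n+1) = _
        show ((a:ℝ) : AddCircle ((r:ℝ)^(n+1))) + (((u:ℝ)) : AddCircle ((r:ℝ)^(n+1))) = _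
        norm_cast
      have hYn : Y (n+1) = (((b + v : ℝ)) : AddCircle ((r:ℝ)^(n+1))) := by
        show qmap r b (n+1) + emb r y (n+1) = _
        show ((b:ℝ) : AddCircle ((r:ℝ)^(n+1))) + (((v:ℝ)) : AddCircle ((r:ℝ)^(n+1))) = _
        norm_cast
      set T : ℝ := (r:ℝ)^(n+1) with hT
      have hTpos : 0 < T := by positivity
      have hterm : dterm r X Y (n+1)
          = T⁻¹ * ‖Complex.exp
              (((2 * π * (((a + u) - (b + v)) / T) : ℝ) : ℂ) * Complex.I) - 1‖ := by
        unfold dterm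
        rw [hXn, hYn, abs_phi_sub]
      have hrn1 : (1:ℝ) ≤ (r:ℝ)^n := one_le_pow₀ hr1
      have hwlow : ∀ m : ℤ, 1/(2*(r:ℝ)) ≤ |((a + u) - (b + v)) / T - m| := by
        intro m
        have hk : ((r:ℤ))^n ∣ ((u:ℤ) - v) - m * (r:ℤ)^(n+1) := by
          refine dvd_sub hdvd ⟨m * r, ?_⟩
          push_cast
          ring
        have hk0 : (u:ℤ) - v - m * (r:ℤ)^(n+1) ≠ 0 := by
          intro h
          have h5 : (u:ℤ) - v = m * (r:ℤ)^(n+1) := by linarith [sub_eq_zero.mp h]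
          have h7 : |(u:ℤ) - v| < (r:ℤ)^(n+1) := by
            have h7a : ((u:ℤ)) < ((r:ℤ))^(n+1) := by exact_mod_cast hult
            have h7b : ((v:ℤ)) < ((r:ℤ))^(n+1) := by exact_mod_cast hvlt
            have h7c : (0:ℤ) ≤ (u:ℤ) := Int.natCast_nonneg u
            have h7d : (0:ℤ) ≤ (v:ℤ) := Int.natCast_nonneg v
            rw [abs_sub_lt_iff]
            constructor <;> linarith
          rcases eq_or_ne m 0 with rfl | hm
          · rw [zero_mul] at h5
            exact hune (sub_eq_zero.mp h5)
          · have h6 : ((r:ℤ))^(n+1) ≤ |m * (r:ℤ)^(n+1)| := by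
              rw [abs_mul, abs_pow, abs_of_nonneg (show (0:ℤ) ≤ (r:ℤ) by positivity)]
              exact le_mul_of_one_le_left (by positivity) (Int.one_le_abs hm)
            rw [← h5] at h6
            exact absurd h6 (not_le.mpr h7)
        have habsk : ((r:ℤ))^n ≤ |(u:ℤ) - v - m * (r:ℤ)^(n+1)| :=
          Int.le_of_dvd (abs_pos.2 hk0) ((dvd_abs _ _).mpr hk)
        have habskR : (r:ℝ)^n ≤ |((u:ℝ) - v - m * T)| := by
          have h10 : ((u:ℝ) - v - m * T) = (((u:ℤ) - v - m * (r:ℤ)^(n+1) : ℤ) : ℝ) := by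
            rw [hT]; push_cast; ring
          rw [h10, ← Int.cast_abs]
          exact_mod_cast habsk
        have hnum : (r:ℝ)^n / 2 ≤ |(a - b) + ((u:ℝ) - v - m * T)| := by
          have h8 : |((u:ℝ) - v - m * T)| - |a - b| ≤ |(a - b) + ((u:ℝ) - v - m * T)| := by
            have h8a := abs_sub_abs_le_abs_sub ((u:ℝ) - v - m * T) (-(a - b))
            rw [abs_neg, sub_neg_eq_add, add_comm] at h8a
            exact h8a
          have h8b : |a - b| ≤ 1/2 := hab
          linarith
        have heq : ((a + u) - (b + v)) / T - m = ((a - b) + ((u:ℝ) - v - m * T)) / T := by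
          field_simp
          ring
        rw [heq, abs_div, abs_of_pos hTpos, le_div_iff₀ hTpos]
        calc 1/(2*(r:ℝ)) * T = (r:ℝ)^n / 2 := by
              rw [hT, pow_succ]
              have hrne : (r:ℝ) ≠ 0 := by positivity
              field_simp
          _ ≤ _ := hnum
      have hchord := chord_ge (((a + u) - (b + v)) / T) (1/(2*(r:ℝ))) hwlow
      have hterm_ge : 2 / (r:ℝ) * T⁻¹ ≤ dterm r X Y (n+1) := by
        rw [hterm]
        have h9 : 4 * (1/(2*(r:ℝ))) = 2 / (r:ℝ) := by
          field_simp
          ring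
        rw [h9] at hchord
        have := mul_le_mul_of_nonneg_left hchord (inv_nonneg.mpr hTpos.le)
        linarith [this]
      have hfinal : ((r:ℝ)^n)⁻¹ ≤ (r:ℝ)^2 * (2 / (r:ℝ) * T⁻¹) := by
        rw [hT]
        rw [show (r:ℝ)^2 * (2 / (r:ℝ) * ((r:ℝ)^(n+1))⁻¹) = 2 * ((r:ℝ)^n)⁻¹ by
          field_simp
          ring]
        have : (0:ℝ) < ((r:ℝ)^n)⁻¹ := by positivity
        linarith
      calc ((r:ℝ)^n)⁻¹ ≤ (r:ℝ)^2 * (2 / (r:ℝ) * T⁻¹) := hfinal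
        _ ≤ (r:ℝ)^2 * dterm r X Y (n+1) :=
            mul_le_mul_of_nonneg_left hterm_ge (by positivity)
        _ ≤ (r:ℝ)^2 * dX r X Y :=
            mul_le_mul_of_nonneg_left (hle (n+1)) (by positivity)
  rw [Dmet]
  exact max_le habd hrho
end
end
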